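/- Let w(x) = 256x⁴ − 80x³ − 32x² − 20x + 1. Then w(x²) and w(x⁴) are irreducible over ℚ. -/

import Mathlib

open Polynomial

namespace Stmt11Cert

noncomputable def M (p : ℕ) (f : ℤ[X]) : (ZMod p)[X] := f.map (Int.castRingHom (ZMod p))

lemma M_mul (p : ℕ) (f g : ℤ[X]) : M p (f * g) = M p f * M p g := Polynomial.map_mul _
lemma M_add (p : ℕ) (f g : ℤ[X]) : M p (f + g) = M p f + M p g := Polynomial.map_add _
lemma M_sub (p : ℕ) (f g : ℤ[X]) : M p (f - g) = M p f - M p g := Polynomial.map_sub _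
lemma M_X (p : ℕ) : M p X = X := Polynomial.map_X _
lemma M_one (p : ℕ) : M p 1 = 1 := Polynomial.map_one _

lemma hp0_3 : M 3 (3 : ℤ[X]) = 0 := by
  have h1 : (3:ℤ[X]) = ((3:ℕ):ℤ[X]) := by norm_cast
  rw [M, h1, Polynomial.map_natCast, ← Polynomial.C_eq_natCast,
    show ((3:ℕ):ZMod 3) = 0 by decide, Polynomial.C_0]

/-- Core: an irreducible polynomial of degree e over `ZMod p` divides `X^(p^e) - X`. -/
lemma irred_dvd (p : ℕ) [Fact p.Prime] (P : (ZMod p)[X]) (hP : Irreducible P) :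
    P ∣ X ^ (p ^ P.natDegree) - X := by
  haveI := Fact.mk hP
  have hP0 : P ≠ 0 := hP.ne_zero
  let pb := AdjoinRoot.powerBasis hP0
  haveI : Fintype (AdjoinRoot P) := Module.fintypeOfFintype pb.basis
  have hcard : Fintype.card (AdjoinRoot P) = p ^ P.natDegree := by
    rw [Module.card_fintype pb.basis, ZMod.card]
    congr 1
    simp [pb, Fintype.card_fin]
  have hroot : (AdjoinRoot.root P) ^ (p ^ P.natDegree) = AdjoinRoot.root P := by
    rw [← hcard]; exact FiniteField.pow_card _
  have h0 : (Polynomial.aeval (AdjoinRoot.root P)) (X ^ (p ^ P.natDegree) - X : (ZMod p)[X]) = 0 := by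
    simp [hroot]
  have hdvd := minpoly.dvd (ZMod p) (AdjoinRoot.root P) h0
  rw [AdjoinRoot.minpoly_root hP0] at hdvd
  exact dvd_trans (dvd_mul_right P _) hdvd


lemma hp0_7 : M 7 (7 : ℤ[X]) = 0 := by
  have h1 : (7:ℤ[X]) = ((7:ℕ):ℤ[X]) := by norm_cast
  rw [M, h1, Polynomial.map_natCast, ← Polynomial.C_eq_natCast,
    show ((7:ℕ):ZMod 7) = 0 by decide, Polynomial.C_0]

lemma hp0_17 : M 17 (17 : ℤ[X]) = 0 := by
  have h1 : (17:ℤ[X]) = ((17:ℕ):ℤ[X]) := by norm_cast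
  rw [M, h1, Polynomial.map_natCast, ← Polynomial.C_eq_natCast,
    show ((17:ℕ):ZMod 17) = 0 by decide, Polynomial.C_0]

lemma mul_step (p : ℕ) (F u v r Q E P0 : ℤ[X]) (s t n : ℕ)
    (hp0 : M p P0 = 0)
    (hu : M p F ∣ X ^ s - M p u) (hv : M p F ∣ X ^ t - M p v)
    (h : u * v = Q * F + r + P0 * E) (hst : s + t = n) :
    M p F ∣ X ^ n - M p r := by
  subst hst
  have hm : M p u * M p v = M p Q * M p F + M p r := by
    have h2 := congrArg (M p) h
    simp only [M_mul, M_add, hp0, zero_mul, add_zero] at h2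
    exact h2
  obtain ⟨a, ha⟩ := hu
  obtain ⟨b, hb⟩ := hv
  refine ⟨M p Q + a * M p v + M p u * b + M p F * (a * b), ?_⟩
  have hs : (X:(ZMod p)[X]) ^ s = M p u + M p F * a := by linear_combination ha
  have ht : (X:(ZMod p)[X]) ^ t = M p v + M p F * b := by linear_combination hb
  rw [pow_add, hs, ht]
  linear_combination hm

lemma coprime_cert (p : ℕ) (F r U V E P0 : ℤ[X]) (n : ℕ)
    (hp0 : M p P0 = 0)
    (hdvd : M p F ∣ X ^ n - M p r)
    (h : U * F + V * (r - X) = 1 + P0 * E) :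
    IsCoprime (M p F) (X ^ n - X : (ZMod p)[X]) := by
  obtain ⟨W, hW⟩ := hdvd
  have hb : M p U * M p F + M p V * (M p r - X) = 1 := by
    have h2 := congrArg (M p) h
    simp only [M_mul, M_add, M_sub, M_X, M_one, hp0, zero_mul, add_zero] at h2
    exact h2
  have hco : IsCoprime (M p F) (M p r - X) := ⟨M p U, M p V, hb⟩
  have heq : (X ^ n - X : (ZMod p)[X]) = (M p r - X) + M p F * W := by
    linear_combination hW
  rw [heq]
  exact hco.add_mul_left_right W

lemma irreducible_of_coprime_certs (p : ℕ) [Fact p.Prime] (F : (ZMod p)[X]) (m : ℕ)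
    (hdeg : F.natDegree = m) (hm : 1 ≤ m)
    (H : ∀ e, 1 ≤ e → 2 * e ≤ m → IsCoprime F (X ^ (p ^ e) - X)) :
    Irreducible F := by
  have hF0 : F ≠ 0 := by
    intro h; rw [h, natDegree_zero] at hdeg; omega
  have key : ∀ w : (ZMod p)[X], w ≠ 0 → ¬IsUnit w → w ∣ F → 2 * w.natDegree ≤ m → False := by
    intro w hw0 hwu hwF hwd
    obtain ⟨P, hPirr, hPw⟩ := WfDvdMonoid.exists_irreducible_factor hwu hw0
    have hPF : P ∣ F := hPw.trans hwF
    have hPd : P.natDegree ≤ w.natDegree := natDegree_le_of_dvd hPw hw0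
    have h1 : 1 ≤ P.natDegree := hPirr.natDegree_pos
    have hco := H P.natDegree h1 (by omega)
    exact hPirr.not_isUnit (hco.isUnit_of_dvd' hPF (irred_dvd p P hPirr))
  constructor
  · intro h
    rw [natDegree_eq_zero_of_isUnit h] at hdeg; omega
  · intro u v huv
    by_contra hc
    push_neg at hc
    obtain ⟨hu, hv⟩ := hc
    have hu0 : u ≠ 0 := by rintro rfl; rw [zero_mul] at huv; exact hF0 huv
    have hv0 : v ≠ 0 := by rintro rfl; rw [mul_zero] at huv; exact hF0 huv
    have hsum : u.natDegree + v.natDegree = m := by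
      rw [← hdeg, huv, natDegree_mul hu0 hv0]
    rcases le_or_gt (2 * u.natDegree) m with h|h
    · exact key u hu0 hu ⟨v, huv⟩ h
    · exact key v hv0 hv ⟨u, by rw [huv, mul_comm]⟩ (by omega)

lemma deg_divisor {k : Type*} [Field k] {A B g : k[X]} (hA : Irreducible A) (hB : Irreducible B)
    (hg : g ∣ A * B) :
    g.natDegree = 0 ∨ g.natDegree = A.natDegree ∨ g.natDegree = B.natDegree ∨
      g.natDegree = A.natDegree + B.natDegree := by
  have hA0 : A ≠ 0 := hA.ne_zero
  have hB0 : B ≠ 0 := hB.ne_zero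
  by_cases hdvd : A ∣ g
  · obtain ⟨g', rfl⟩ := hdvd
    have hg' : g' ∣ B := (mul_dvd_mul_iff_left hA0).mp hg
    have hg'0 : g' ≠ 0 := by
      rintro rfl
      exact (mul_ne_zero hA0 hB0) (zero_dvd_iff.mp (by simpa using hg))
    obtain ⟨c, hc⟩ := hg'
    rcases hB.isUnit_or_isUnit hc with h|h
    · right; left
      rw [natDegree_mul hA0 hg'0, natDegree_eq_zero_of_isUnit h, add_zero]
    · right; right; right
      have hc0 : c ≠ 0 := fun h0 => hB0 (by rw [hc, h0, mul_zero])
      rw [natDegree_mul hA0 hg'0, hc, natDegree_mul hg'0 hc0,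
        natDegree_eq_zero_of_isUnit h, add_zero]
  · have hco : IsCoprime A g := hA.coprime_iff_not_dvd.mpr hdvd
    have hgB : g ∣ B := hco.symm.dvd_of_dvd_mul_left hg
    obtain ⟨c, hc⟩ := hgB
    have hg0 : g ≠ 0 := fun h0 => hB0 (by rw [hc, h0, zero_mul])
    have hc0 : c ≠ 0 := fun h0 => hB0 (by rw [hc, h0, mul_zero])
    rcases hB.isUnit_or_isUnit hc with h|h
    · left; exact natDegree_eq_zero_of_isUnit h
    · right; right; left
      rw [hc, natDegree_mul hg0 hc0, natDegree_eq_zero_of_isUnit h, add_zero]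

lemma prim_of_c0 (f : ℤ[X]) (h : f.coeff 0 = 1) : f.IsPrimitive := by
  intro r hr
  obtain ⟨g, hg⟩ := hr
  apply isUnit_of_dvd_one
  refine ⟨g.coeff 0, ?_⟩
  rw [← h, hg, coeff_C_mul]

lemma degree_constraint (p : ℕ) [Fact p.Prime] (f A B a b : ℤ[X])
    (hab : f = a * b)
    (hfact : M p f = M p A * M p B)
    (hA : Irreducible (M p A)) (hB : Irreducible (M p B))
    (hla : ((a.leadingCoeff : ℤ) : ZMod p) ≠ 0) :
    a.natDegree = 0 ∨ a.natDegree = (M p A).natDegree ∨ a.natDegree = (M p B).natDegree ∨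
      a.natDegree = (M p A).natDegree + (M p B).natDegree := by
  have h1 : M p a ∣ M p A * M p B := ⟨M p b, by rw [← hfact, hab, M_mul]⟩
  have h2 := deg_divisor hA hB h1
  rwa [show (M p a).natDegree = a.natDegree from
    natDegree_map_of_leadingCoeff_ne_zero _ hla] at h2




instance : Fact (Nat.Prime 3) := ⟨by norm_num⟩
instance : Fact (Nat.Prime 7) := ⟨by norm_num⟩
instance : Fact (Nat.Prime 17) := ⟨by norm_num⟩
attribute [-instance] ZMod.instField

lemma lead_ne (p : ℕ) (f a b : ℤ[X]) (hab : f = a * b) (hlf : f.leadingCoeff = 256)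
    (h256 : ((256:ℤ) : ZMod p) ≠ 0) : ((a.leadingCoeff : ℤ) : ZMod p) ≠ 0 := by
  intro h
  have hm : a.leadingCoeff * b.leadingCoeff = 256 := by rw [← leadingCoeff_mul, ← hab, hlf]
  apply h256
  rw [← hm]
  push_cast
  rw [h, zero_mul]

noncomputable def f8 : ℤ[X] := (1 : ℤ[X]) + (-20) * X ^ 2 + (-32) * X ^ 4 + (-80) * X ^ 6 + 256 * X ^ 8

lemma f8_ndeg : f8.natDegree = 8 := by simp only [f8]; compute_degree! <;> norm_num

lemma f8_lead : f8.leadingCoeff = 256 := by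
  rw [Polynomial.leadingCoeff, f8_ndeg]; simp only [f8]; compute_degree! <;> norm_num

noncomputable def f16 : ℤ[X] := (1 : ℤ[X]) + (-20) * X ^ 4 + (-32) * X ^ 8 + (-80) * X ^ 12 + 256 * X ^ 16

lemma f16_ndeg : f16.natDegree = 16 := by simp only [f16]; compute_degree! <;> norm_num

lemma f16_lead : f16.leadingCoeff = 256 := by
  rw [Polynomial.leadingCoeff, f16_ndeg]; simp only [f16]; compute_degree! <;> norm_num

noncomputable def c1A : ℤ[X] := ((-6) : ℤ[X]) + X ^ 2

lemma c1A_cop : ∀ e, 1 ≤ e → 2 * e ≤ 2 → IsCoprime (M 17 c1A) ((X : (ZMod 17)[X]) ^ (17 ^ e) - X) := by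
  have dw1 : M 17 c1A ∣ (X : (ZMod 17)[X]) ^ 1 - M 17 X := by rw [M_X, pow_one, sub_self]; exact dvd_zero _
  have dw2 : M 17 c1A ∣ (X : (ZMod 17)[X]) ^ 2 - M 17 ((6 : ℤ[X])) :=
    mul_step 17 c1A (X) (X) ((6 : ℤ[X])) ((1 : ℤ[X])) ((0 : ℤ[X])) (17 : ℤ[X]) 1 1 2 hp0_17 dw1 dw1 (by simp only [c1A]; ring) (by norm_num)
  have dw4 : M 17 c1A ∣ (X : (ZMod 17)[X]) ^ 4 - M 17 ((2 : ℤ[X])) :=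
    mul_step 17 c1A ((6 : ℤ[X])) ((6 : ℤ[X])) ((2 : ℤ[X])) ((0 : ℤ[X])) ((2 : ℤ[X])) (17 : ℤ[X]) 2 2 4 hp0_17 dw2 dw2 (by simp only [c1A]; ring) (by norm_num)
  have dw8 : M 17 c1A ∣ (X : (ZMod 17)[X]) ^ 8 - M 17 ((4 : ℤ[X])) :=
    mul_step 17 c1A ((2 : ℤ[X])) ((2 : ℤ[X])) ((4 : ℤ[X])) ((0 : ℤ[X])) ((0 : ℤ[X])) (17 : ℤ[X]) 4 4 8 hp0_17 dw4 dw4 (by simp only [c1A]; ring) (by norm_num)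
  have dw16 : M 17 c1A ∣ (X : (ZMod 17)[X]) ^ 16 - M 17 (((-1) : ℤ[X])) :=
    mul_step 17 c1A ((4 : ℤ[X])) ((4 : ℤ[X])) (((-1) : ℤ[X])) ((0 : ℤ[X])) ((1 : ℤ[X])) (17 : ℤ[X]) 8 8 16 hp0_17 dw8 dw8 (by simp only [c1A]; ring) (by norm_num)
  have dw17 : M 17 c1A ∣ (X : (ZMod 17)[X]) ^ 17 - M 17 ((-1) * X) :=
    mul_step 17 c1A (((-1) : ℤ[X])) (X) ((-1) * X) ((0 : ℤ[X])) ((0 : ℤ[X])) (17 : ℤ[X]) 16 1 17 hp0_17 dw16 dw1 (by simp only [c1A]; ring) (by norm_num)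
  intro e h1 h2
  have h3 : e ≤ 1 := by omega
  interval_cases e
  · exact coprime_cert 17 c1A ((-1) * X) (((-3) : ℤ[X])) (7 * X) ((1 : ℤ[X]) + (-1) * X ^ 2) (17 : ℤ[X]) (17 ^ 1) hp0_17 dw17 (by simp only [c1A]; ring)

lemma c1A_ndeg : c1A.natDegree = 2 := by simp only [c1A]; compute_degree! <;> norm_num
lemma c1A_lead : c1A.leadingCoeff = 1 := by
  rw [Polynomial.leadingCoeff, c1A_ndeg]; simp only [c1A]; compute_degree! <;> norm_num
lemma c1A_deg : (M 17 c1A).natDegree = 2 := by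
  simp only [M]
  rw [natDegree_map_of_leadingCoeff_ne_zero _ (by
    rw [c1A_lead]; exact (by decide : ((1 : ℤ) : ZMod 17) ≠ 0)), c1A_ndeg]
lemma c1A_irr : Irreducible (M 17 c1A) :=
  irreducible_of_coprime_certs 17 _ 2 c1A_deg (by norm_num) c1A_cop

noncomputable def c1B : ℤ[X] := ((-3) : ℤ[X]) + (-6) * X ^ 4 + X ^ 6

lemma c1B_cop : ∀ e, 1 ≤ e → 2 * e ≤ 6 → IsCoprime (M 17 c1B) ((X : (ZMod 17)[X]) ^ (17 ^ e) - X) := by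
  have dw1 : M 17 c1B ∣ (X : (ZMod 17)[X]) ^ 1 - M 17 X := by rw [M_X, pow_one, sub_self]; exact dvd_zero _
  have dw2 : M 17 c1B ∣ (X : (ZMod 17)[X]) ^ 2 - M 17 (X ^ 2) :=
    mul_step 17 c1B (X) (X) (X ^ 2) ((0 : ℤ[X])) ((0 : ℤ[X])) (17 : ℤ[X]) 1 1 2 hp0_17 dw1 dw1 (by simp only [c1B]; ring) (by norm_num)
  have dw4 : M 17 c1B ∣ (X : (ZMod 17)[X]) ^ 4 - M 17 (X ^ 4) :=
    mul_step 17 c1B (X ^ 2) (X ^ 2) (X ^ 4) ((0 : ℤ[X])) ((0 : ℤ[X])) (17 : ℤ[X]) 2 2 4 hp0_17 dw2 dw2 (by simp only [c1B]; ring) (by norm_num)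
  have dw8 : M 17 c1B ∣ (X : (ZMod 17)[X]) ^ 8 - M 17 ((1 : ℤ[X]) + 3 * X ^ 2 + 2 * X ^ 4) :=
    mul_step 17 c1B (X ^ 4) (X ^ 4) ((1 : ℤ[X]) + 3 * X ^ 2 + 2 * X ^ 4) ((6 : ℤ[X]) + X ^ 2) ((1 : ℤ[X]) + 2 * X ^ 4) (17 : ℤ[X]) 4 4 8 hp0_17 dw4 dw4 (by simp only [c1B]; ring) (by norm_num)
  have dw16 : M 17 c1B ∣ (X : (ZMod 17)[X]) ^ 16 - M 17 ((7 : ℤ[X]) + X ^ 2 + 8 * X ^ 4) :=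
    mul_step 17 c1B ((1 : ℤ[X]) + 3 * X ^ 2 + 2 * X ^ 4) ((1 : ℤ[X]) + 3 * X ^ 2 + 2 * X ^ 4) ((7 : ℤ[X]) + X ^ 2 + 8 * X ^ 4) ((2 : ℤ[X]) + 4 * X ^ 2) (X ^ 2 + X ^ 4 + 2 * X ^ 6) (17 : ℤ[X]) 8 8 16 hp0_17 dw8 dw8 (by simp only [c1B]; ring) (by norm_num)
  have dw17 : M 17 c1B ∣ (X : (ZMod 17)[X]) ^ 17 - M 17 (7 * X + X ^ 3 + 8 * X ^ 5) :=
    mul_step 17 c1B ((7 : ℤ[X]) + X ^ 2 + 8 * X ^ 4) (X) (7 * X + X ^ 3 + 8 * X ^ 5) ((0 : ℤ[X])) ((0 : ℤ[X])) (17 : ℤ[X]) 16 1 17 hp0_17 dw16 dw1 (by simp only [c1B]; ring) (by norm_num)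
  have dw34 : M 17 c1B ∣ (X : (ZMod 17)[X]) ^ 34 - M 17 ((8 : ℤ[X]) + 8 * X ^ 2 + X ^ 4) :=
    mul_step 17 c1B (7 * X + X ^ 3 + 8 * X ^ 5) (7 * X + X ^ 3 + 8 * X ^ 5) ((8 : ℤ[X]) + 8 * X ^ 2 + X ^ 4) (((-3) : ℤ[X]) + (-8) * X ^ 2 + (-4) * X ^ 4) (((-1) : ℤ[X]) + X ^ 2 + (-1) * X ^ 4 + 4 * X ^ 6 + 4 * X ^ 10) (17 : ℤ[X]) 17 17 34 hp0_17 dw17 dw17 (by simp only [c1B]; ring) (by norm_num)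
  have dw68 : M 17 c1B ∣ (X : (ZMod 17)[X]) ^ 68 - M 17 (((-6) : ℤ[X]) + (-5) * X ^ 2 + 8 * X ^ 4) :=
    mul_step 17 c1B ((8 : ℤ[X]) + 8 * X ^ 2 + X ^ 4) ((8 : ℤ[X]) + 8 * X ^ 2 + X ^ 4) (((-6) : ℤ[X]) + (-5) * X ^ 2 + 8 * X ^ 4) ((5 : ℤ[X]) + X ^ 2) ((5 : ℤ[X]) + 8 * X ^ 2 + 6 * X ^ 4 + X ^ 6) (17 : ℤ[X]) 34 34 68 hp0_17 dw34 dw34 (by simp only [c1B]; ring) (by norm_num)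
  have dw136 : M 17 c1B ∣ (X : (ZMod 17)[X]) ^ 136 - M 17 (((-4) : ℤ[X]) + (-3) * X ^ 2 + 2 * X ^ 4) :=
    mul_step 17 c1B (((-6) : ℤ[X]) + (-5) * X ^ 2 + 8 * X ^ 4) (((-6) : ℤ[X]) + (-5) * X ^ 2 + 8 * X ^ 4) (((-4) : ℤ[X]) + (-3) * X ^ 2 + 2 * X ^ 4) (((-2) : ℤ[X]) + (-4) * X ^ 2) ((2 : ℤ[X]) + 3 * X ^ 2 + (-5) * X ^ 4 + (-6) * X ^ 6 + 4 * X ^ 8) (17 : ℤ[X]) 68 68 136 hp0_17 dw68 dw68 (by simp only [c1B]; ring) (by norm_num)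
  have dw272 : M 17 c1B ∣ (X : (ZMod 17)[X]) ^ 272 - M 17 ((1 : ℤ[X]) + 2 * X ^ 2 + (-3) * X ^ 4) :=
    mul_step 17 c1B (((-4) : ℤ[X]) + (-3) * X ^ 2 + 2 * X ^ 4) (((-4) : ℤ[X]) + (-3) * X ^ 2 + 2 * X ^ 4) ((1 : ℤ[X]) + 2 * X ^ 2 + (-3) * X ^ 4) (((-5) : ℤ[X]) + 4 * X ^ 2) (2 * X ^ 2 + (-2) * X ^ 4 + X ^ 6) (17 : ℤ[X]) 136 136 272 hp0_17 dw136 dw136 (by simp only [c1B]; ring) (by norm_num)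
  have dw289 : M 17 c1B ∣ (X : (ZMod 17)[X]) ^ 289 - M 17 (5 * X + (-6) * X ^ 3 + 2 * X ^ 5) :=
    mul_step 17 c1B ((1 : ℤ[X]) + 2 * X ^ 2 + (-3) * X ^ 4) (7 * X + X ^ 3 + 8 * X ^ 5) (5 * X + (-6) * X ^ 3 + 2 * X ^ 5) (5 * X + (-7) * X ^ 3) (X + X ^ 5 + (-2) * X ^ 7 + (-1) * X ^ 9) (17 : ℤ[X]) 272 17 289 hp0_17 dw272 dw17 (by simp only [c1B]; ring) (by norm_num)
  have dw578 : M 17 c1B ∣ (X : (ZMod 17)[X]) ^ 578 - M 17 (((-2) : ℤ[X]) + 8 * X ^ 2 + (-1) * X ^ 4) :=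
    mul_step 17 c1B (5 * X + (-6) * X ^ 3 + 2 * X ^ 5) (5 * X + (-6) * X ^ 3 + 2 * X ^ 5) (((-2) : ℤ[X]) + 8 * X ^ 2 + (-1) * X ^ 4) ((5 : ℤ[X]) + 4 * X ^ 4) ((1 : ℤ[X]) + X ^ 2 + (-1) * X ^ 4 + 3 * X ^ 6) (17 : ℤ[X]) 289 289 578 hp0_17 dw289 dw289 (by simp only [c1B]; ring) (by norm_num)
  have dw1156 : M 17 c1B ∣ (X : (ZMod 17)[X]) ^ 1156 - M 17 ((8 : ℤ[X]) + 5 * X ^ 2 + 8 * X ^ 4) :=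
    mul_step 17 c1B (((-2) : ℤ[X]) + 8 * X ^ 2 + (-1) * X ^ 4) (((-2) : ℤ[X]) + 8 * X ^ 2 + (-1) * X ^ 4) ((8 : ℤ[X]) + 5 * X ^ 2 + 8 * X ^ 4) ((7 : ℤ[X]) + X ^ 2) ((1 : ℤ[X]) + (-2) * X ^ 2 + 6 * X ^ 4 + (-1) * X ^ 6) (17 : ℤ[X]) 578 578 1156 hp0_17 dw578 dw578 (by simp only [c1B]; ring) (by norm_num)
  have dw2312 : M 17 c1B ∣ (X : (ZMod 17)[X]) ^ 2312 - M 17 (((-6) : ℤ[X]) + (-4) * X ^ 4) :=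
    mul_step 17 c1B ((8 : ℤ[X]) + 5 * X ^ 2 + 8 * X ^ 4) ((8 : ℤ[X]) + 5 * X ^ 2 + 8 * X ^ 4) (((-6) : ℤ[X]) + (-4) * X ^ 4) ((5 : ℤ[X]) + (-4) * X ^ 2) ((5 : ℤ[X]) + 4 * X ^ 2 + 11 * X ^ 4 + 3 * X ^ 6 + 4 * X ^ 8) (17 : ℤ[X]) 1156 1156 2312 hp0_17 dw1156 dw1156 (by simp only [c1B]; ring) (by norm_num)
  have dw4624 : M 17 c1B ∣ (X : (ZMod 17)[X]) ^ 4624 - M 17 ((1 : ℤ[X]) + (-3) * X ^ 2 + (-5) * X ^ 4) :=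
    mul_step 17 c1B (((-6) : ℤ[X]) + (-4) * X ^ 4) (((-6) : ℤ[X]) + (-4) * X ^ 4) ((1 : ℤ[X]) + (-3) * X ^ 2 + (-5) * X ^ 4) (((-6) : ℤ[X]) + (-1) * X ^ 2) ((1 : ℤ[X]) + X ^ 4 + X ^ 8) (17 : ℤ[X]) 2312 2312 4624 hp0_17 dw2312 dw2312 (by simp only [c1B]; ring) (by norm_num)
  have dw4913 : M 17 c1B ∣ (X : (ZMod 17)[X]) ^ 4913 - M 17 ((-1) * X) :=
    mul_step 17 c1B ((1 : ℤ[X]) + (-3) * X ^ 2 + (-5) * X ^ 4) (5 * X + (-6) * X ^ 3 + 2 * X ^ 5) ((-1) * X) ((-2) * X + 7 * X ^ 3) ((-1) * X ^ 5 + 4 * X ^ 7 + (-1) * X ^ 9) (17 : ℤ[X]) 4624 289 4913 hp0_17 dw4624 dw289 (by simp only [c1B]; ring) (by norm_num)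
  intro e h1 h2
  have h3 : e ≤ 3 := by omega
  interval_cases e
  · exact coprime_cert 17 c1B (7 * X + X ^ 3 + 8 * X ^ 5) (((-6) : ℤ[X]) + 8 * X ^ 2 + (-7) * X ^ 4) (4 * X + 4 * X ^ 3 + 3 * X ^ 5) ((1 : ℤ[X]) + 5 * X ^ 4 + 5 * X ^ 8 + X ^ 10) (17 : ℤ[X]) (17 ^ 1) hp0_17 dw17 (by simp only [c1B]; ring)
  · exact coprime_cert 17 c1B (5 * X + (-6) * X ^ 3 + 2 * X ^ 5) (((-6) : ℤ[X]) + (-8) * X ^ 2 + (-1) * X ^ 4) ((-6) * X + (-6) * X ^ 3 + (-8) * X ^ 5) ((1 : ℤ[X]) + 3 * X ^ 4 + 2 * X ^ 6 + 2 * X ^ 8 + (-1) * X ^ 10) (17 : ℤ[X]) (17 ^ 2) hp0_17 (by rw [show (17:ℕ) ^ 2 = 289 by norm_num]; exact dw289) (by simp only [c1B]; ring)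
  · exact coprime_cert 17 c1B ((-1) * X) (((-6) : ℤ[X])) (X ^ 3 + (-3) * X ^ 5) ((1 : ℤ[X]) + 2 * X ^ 4) (17 : ℤ[X]) (17 ^ 3) hp0_17 (by rw [show (17:ℕ) ^ 3 = 4913 by norm_num]; exact dw4913) (by simp only [c1B]; ring)

lemma c1B_ndeg : c1B.natDegree = 6 := by simp only [c1B]; compute_degree! <;> norm_num
lemma c1B_lead : c1B.leadingCoeff = 1 := by
  rw [Polynomial.leadingCoeff, c1B_ndeg]; simp only [c1B]; compute_degree! <;> norm_num
lemma c1B_deg : (M 17 c1B).natDegree = 6 := by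
  simp only [M]
  rw [natDegree_map_of_leadingCoeff_ne_zero _ (by
    rw [c1B_lead]; exact (by decide : ((1 : ℤ) : ZMod 17) ≠ 0)), c1B_ndeg]
lemma c1B_irr : Irreducible (M 17 c1B) :=
  irreducible_of_coprime_certs 17 _ 6 c1B_deg (by norm_num) c1B_cop

lemma c1_fact : M 17 f8 = M 17 c1A * M 17 c1B := by
  have h : f8 = c1A * c1B + (17 : ℤ[X]) * (((-1) : ℤ[X]) + (-1) * X ^ 2 + (-4) * X ^ 4 + (-4) * X ^ 6 + 15 * X ^ 8) := by
    simp only [f8, c1A, c1B]; ring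
  rw [h, M_add, M_mul, M_mul, hp0_17, zero_mul, add_zero]

noncomputable def c2A : ℤ[X] := (1 : ℤ[X]) + X + X ^ 2 + X ^ 3 + X ^ 4

lemma c2A_cop : ∀ e, 1 ≤ e → 2 * e ≤ 4 → IsCoprime (M 3 c2A) ((X : (ZMod 3)[X]) ^ (3 ^ e) - X) := by
  have dw1 : M 3 c2A ∣ (X : (ZMod 3)[X]) ^ 1 - M 3 X := by rw [M_X, pow_one, sub_self]; exact dvd_zero _
  have dw2 : M 3 c2A ∣ (X : (ZMod 3)[X]) ^ 2 - M 3 (X ^ 2) :=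
    mul_step 3 c2A (X) (X) (X ^ 2) ((0 : ℤ[X])) ((0 : ℤ[X])) (3 : ℤ[X]) 1 1 2 hp0_3 dw1 dw1 (by simp only [c2A]; ring) (by norm_num)
  have dw3 : M 3 c2A ∣ (X : (ZMod 3)[X]) ^ 3 - M 3 (X ^ 3) :=
    mul_step 3 c2A (X ^ 2) (X) (X ^ 3) ((0 : ℤ[X])) ((0 : ℤ[X])) (3 : ℤ[X]) 2 1 3 hp0_3 dw2 dw1 (by simp only [c2A]; ring) (by norm_num)
  have dw6 : M 3 c2A ∣ (X : (ZMod 3)[X]) ^ 6 - M 3 (X) :=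
    mul_step 3 c2A (X ^ 3) (X ^ 3) (X) ((-1) * X + X ^ 2) ((0 : ℤ[X])) (3 : ℤ[X]) 3 3 6 hp0_3 dw3 dw3 (by simp only [c2A]; ring) (by norm_num)
  have dw9 : M 3 c2A ∣ (X : (ZMod 3)[X]) ^ 9 - M 3 (((-1) : ℤ[X]) + (-1) * X + (-1) * X ^ 2 + (-1) * X ^ 3) :=
    mul_step 3 c2A (X) (X ^ 3) (((-1) : ℤ[X]) + (-1) * X + (-1) * X ^ 2 + (-1) * X ^ 3) ((1 : ℤ[X])) ((0 : ℤ[X])) (3 : ℤ[X]) 6 3 9 hp0_3 dw6 dw3 (by simp only [c2A]; ring) (by norm_num)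
  intro e h1 h2
  have h3 : e ≤ 2 := by omega
  interval_cases e
  · exact coprime_cert 3 c2A (X ^ 3) ((1 : ℤ[X]) + (-1) * X + (-1) * X ^ 2) ((-1) * X + (-1) * X ^ 2 + X ^ 3) ((-1) * X ^ 4 + (-1) * X ^ 5) (3 : ℤ[X]) (3 ^ 1) hp0_3 dw3 (by simp only [c2A]; ring)
  · exact coprime_cert 3 c2A (((-1) : ℤ[X]) + (-1) * X + (-1) * X ^ 2 + (-1) * X ^ 3) (((-1) : ℤ[X]) + (-1) * X) ((1 : ℤ[X]) + (-1) * X + (-1) * X ^ 2) (((-1) : ℤ[X]) + (-1) * X) (3 : ℤ[X]) (3 ^ 2) hp0_3 (by rw [show (3:ℕ) ^ 2 = 9 by norm_num]; exact dw9) (by simp only [c2A]; ring)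

lemma c2A_ndeg : c2A.natDegree = 4 := by simp only [c2A]; compute_degree! <;> norm_num
lemma c2A_lead : c2A.leadingCoeff = 1 := by
  rw [Polynomial.leadingCoeff, c2A_ndeg]; simp only [c2A]; compute_degree! <;> norm_num
lemma c2A_deg : (M 3 c2A).natDegree = 4 := by
  simp only [M]
  rw [natDegree_map_of_leadingCoeff_ne_zero _ (by
    rw [c2A_lead]; exact (by decide : ((1 : ℤ) : ZMod 3) ≠ 0)), c2A_ndeg]
lemma c2A_irr : Irreducible (M 3 c2A) :=
  irreducible_of_coprime_certs 3 _ 4 c2A_deg (by norm_num) c2A_cop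

noncomputable def c2B : ℤ[X] := (1 : ℤ[X]) + (-1) * X + X ^ 2 + (-1) * X ^ 3 + X ^ 4

lemma c2B_cop : ∀ e, 1 ≤ e → 2 * e ≤ 4 → IsCoprime (M 3 c2B) ((X : (ZMod 3)[X]) ^ (3 ^ e) - X) := by
  have dw1 : M 3 c2B ∣ (X : (ZMod 3)[X]) ^ 1 - M 3 X := by rw [M_X, pow_one, sub_self]; exact dvd_zero _
  have dw2 : M 3 c2B ∣ (X : (ZMod 3)[X]) ^ 2 - M 3 (X ^ 2) :=
    mul_step 3 c2B (X) (X) (X ^ 2) ((0 : ℤ[X])) ((0 : ℤ[X])) (3 : ℤ[X]) 1 1 2 hp0_3 dw1 dw1 (by simp only [c2B]; ring) (by norm_num)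
  have dw3 : M 3 c2B ∣ (X : (ZMod 3)[X]) ^ 3 - M 3 (X ^ 3) :=
    mul_step 3 c2B (X ^ 2) (X) (X ^ 3) ((0 : ℤ[X])) ((0 : ℤ[X])) (3 : ℤ[X]) 2 1 3 hp0_3 dw2 dw1 (by simp only [c2B]; ring) (by norm_num)
  have dw6 : M 3 c2B ∣ (X : (ZMod 3)[X]) ^ 6 - M 3 ((-1) * X) :=
    mul_step 3 c2B (X ^ 3) (X ^ 3) ((-1) * X) (X + X ^ 2) ((0 : ℤ[X])) (3 : ℤ[X]) 3 3 6 hp0_3 dw3 dw3 (by simp only [c2B]; ring) (by norm_num)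
  have dw9 : M 3 c2B ∣ (X : (ZMod 3)[X]) ^ 9 - M 3 ((1 : ℤ[X]) + (-1) * X + X ^ 2 + (-1) * X ^ 3) :=
    mul_step 3 c2B ((-1) * X) (X ^ 3) ((1 : ℤ[X]) + (-1) * X + X ^ 2 + (-1) * X ^ 3) (((-1) : ℤ[X])) ((0 : ℤ[X])) (3 : ℤ[X]) 6 3 9 hp0_3 dw6 dw3 (by simp only [c2B]; ring) (by norm_num)
  intro e h1 h2
  have h3 : e ≤ 2 := by omega
  interval_cases e
  · exact coprime_cert 3 c2B (X ^ 3) ((1 : ℤ[X]) + X + (-1) * X ^ 2) ((-1) * X + X ^ 2 + X ^ 3) ((-1) * X ^ 4 + X ^ 5) (3 : ℤ[X]) (3 ^ 1) hp0_3 dw3 (by simp only [c2B]; ring)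
  · exact coprime_cert 3 c2B ((1 : ℤ[X]) + (-1) * X + X ^ 2 + (-1) * X ^ 3) (((-1) : ℤ[X]) + X) (((-1) : ℤ[X]) + (-1) * X + X ^ 2) (((-1) : ℤ[X]) + X) (3 : ℤ[X]) (3 ^ 2) hp0_3 (by rw [show (3:ℕ) ^ 2 = 9 by norm_num]; exact dw9) (by simp only [c2B]; ring)

lemma c2B_ndeg : c2B.natDegree = 4 := by simp only [c2B]; compute_degree! <;> norm_num
lemma c2B_lead : c2B.leadingCoeff = 1 := by
  rw [Polynomial.leadingCoeff, c2B_ndeg]; simp only [c2B]; compute_degree! <;> norm_num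
lemma c2B_deg : (M 3 c2B).natDegree = 4 := by
  simp only [M]
  rw [natDegree_map_of_leadingCoeff_ne_zero _ (by
    rw [c2B_lead]; exact (by decide : ((1 : ℤ) : ZMod 3) ≠ 0)), c2B_ndeg]
lemma c2B_irr : Irreducible (M 3 c2B) :=
  irreducible_of_coprime_certs 3 _ 4 c2B_deg (by norm_num) c2B_cop

lemma c2_fact : M 3 f8 = M 3 c2A * M 3 c2B := by
  have h : f8 = c2A * c2B + (3 : ℤ[X]) * ((-7) * X ^ 2 + (-11) * X ^ 4 + (-27) * X ^ 6 + 85 * X ^ 8) := by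
    simp only [f8, c2A, c2B]; ring
  rw [h, M_add, M_mul, M_mul, hp0_3, zero_mul, add_zero]

noncomputable def c3A : ℤ[X] := (3 : ℤ[X]) + 2 * X ^ 4 + (-3) * X ^ 8

lemma c3A_cop : ∀ e, 1 ≤ e → 2 * e ≤ 8 → IsCoprime (M 7 c3A) ((X : (ZMod 7)[X]) ^ (7 ^ e) - X) := by
  have dw1 : M 7 c3A ∣ (X : (ZMod 7)[X]) ^ 1 - M 7 X := by rw [M_X, pow_one, sub_self]; exact dvd_zero _
  have dw2 : M 7 c3A ∣ (X : (ZMod 7)[X]) ^ 2 - M 7 (X ^ 2) :=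
    mul_step 7 c3A (X) (X) (X ^ 2) ((0 : ℤ[X])) ((0 : ℤ[X])) (7 : ℤ[X]) 1 1 2 hp0_7 dw1 dw1 (by simp only [c3A]; ring) (by norm_num)
  have dw4 : M 7 c3A ∣ (X : (ZMod 7)[X]) ^ 4 - M 7 (X ^ 4) :=
    mul_step 7 c3A (X ^ 2) (X ^ 2) (X ^ 4) ((0 : ℤ[X])) ((0 : ℤ[X])) (7 : ℤ[X]) 2 2 4 hp0_7 dw2 dw2 (by simp only [c3A]; ring) (by norm_num)
  have dw6 : M 7 c3A ∣ (X : (ZMod 7)[X]) ^ 6 - M 7 (X ^ 6) :=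
    mul_step 7 c3A (X ^ 4) (X ^ 2) (X ^ 6) ((0 : ℤ[X])) ((0 : ℤ[X])) (7 : ℤ[X]) 4 2 6 hp0_7 dw4 dw2 (by simp only [c3A]; ring) (by norm_num)
  have dw7 : M 7 c3A ∣ (X : (ZMod 7)[X]) ^ 7 - M 7 (X ^ 7) :=
    mul_step 7 c3A (X ^ 6) (X) (X ^ 7) ((0 : ℤ[X])) ((0 : ℤ[X])) (7 : ℤ[X]) 6 1 7 hp0_7 dw6 dw1 (by simp only [c3A]; ring) (by norm_num)
  have dw14 : M 7 c3A ∣ (X : (ZMod 7)[X]) ^ 14 - M 7 (3 * X ^ 2 + 3 * X ^ 6) :=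
    mul_step 7 c3A (X ^ 7) (X ^ 7) (3 * X ^ 2 + 3 * X ^ 6) ((-1) * X ^ 2 + 2 * X ^ 6) ((-1) * X ^ 6 + (-1) * X ^ 10 + X ^ 14) (7 : ℤ[X]) 7 7 14 hp0_7 dw7 dw7 (by simp only [c3A]; ring) (by norm_num)
  have dw28 : M 7 c3A ∣ (X : (ZMod 7)[X]) ^ 28 - M 7 ((3 : ℤ[X]) + (-1) * X ^ 4) :=
    mul_step 7 c3A (3 * X ^ 2 + 3 * X ^ 6) (3 * X ^ 2 + 3 * X ^ 6) ((3 : ℤ[X]) + (-1) * X ^ 4) (((-1) : ℤ[X]) + (-3) * X ^ 4) (3 * X ^ 4 + 3 * X ^ 8) (7 : ℤ[X]) 14 14 28 hp0_7 dw14 dw14 (by simp only [c3A]; ring) (by norm_num)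
  have dw42 : M 7 c3A ∣ (X : (ZMod 7)[X]) ^ 42 - M 7 ((-1) * X ^ 2 + (-3) * X ^ 6) :=
    mul_step 7 c3A ((3 : ℤ[X]) + (-1) * X ^ 4) (3 * X ^ 2 + 3 * X ^ 6) ((-1) * X ^ 2 + (-3) * X ^ 6) (X ^ 2) (X ^ 2 + X ^ 6) (7 : ℤ[X]) 28 14 42 hp0_7 dw28 dw14 (by simp only [c3A]; ring) (by norm_num)
  have dw49 : M 7 c3A ∣ (X : (ZMod 7)[X]) ^ 49 - M 7 ((-3) * X + 2 * X ^ 5) :=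
    mul_step 7 c3A ((-1) * X ^ 2 + (-3) * X ^ 6) (X ^ 7) ((-3) * X + 2 * X ^ 5) (X + X ^ 5) ((-1) * X ^ 5) (7 : ℤ[X]) 42 7 49 hp0_7 dw42 dw7 (by simp only [c3A]; ring) (by norm_num)
  have dw98 : M 7 c3A ∣ (X : (ZMod 7)[X]) ^ 98 - M 7 ((-1) * X ^ 2) :=
    mul_step 7 c3A ((-3) * X + 2 * X ^ 5) ((-3) * X + 2 * X ^ 5) ((-1) * X ^ 2) (X ^ 2) (X ^ 2 + (-2) * X ^ 6 + X ^ 10) (7 : ℤ[X]) 49 49 98 hp0_7 dw49 dw49 (by simp only [c3A]; ring) (by norm_num)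
  have dw196 : M 7 c3A ∣ (X : (ZMod 7)[X]) ^ 196 - M 7 (X ^ 4) :=
    mul_step 7 c3A ((-1) * X ^ 2) ((-1) * X ^ 2) (X ^ 4) ((0 : ℤ[X])) ((0 : ℤ[X])) (7 : ℤ[X]) 98 98 196 hp0_7 dw98 dw98 (by simp only [c3A]; ring) (by norm_num)
  have dw294 : M 7 c3A ∣ (X : (ZMod 7)[X]) ^ 294 - M 7 ((-1) * X ^ 6) :=
    mul_step 7 c3A (X ^ 4) ((-1) * X ^ 2) ((-1) * X ^ 6) ((0 : ℤ[X])) ((0 : ℤ[X])) (7 : ℤ[X]) 196 98 294 hp0_7 dw196 dw98 (by simp only [c3A]; ring) (by norm_num)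
  have dw343 : M 7 c3A ∣ (X : (ZMod 7)[X]) ^ 343 - M 7 ((-2) * X ^ 3 + (-3) * X ^ 7) :=
    mul_step 7 c3A ((-1) * X ^ 6) ((-3) * X + 2 * X ^ 5) ((-2) * X ^ 3 + (-3) * X ^ 7) (3 * X ^ 3) ((-1) * X ^ 3 + X ^ 11) (7 : ℤ[X]) 294 49 343 hp0_7 dw294 dw49 (by simp only [c3A]; ring) (by norm_num)
  have dw686 : M 7 c3A ∣ (X : (ZMod 7)[X]) ^ 686 - M 7 ((-3) * X ^ 2 + (-3) * X ^ 6) :=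
    mul_step 7 c3A ((-2) * X ^ 3 + (-3) * X ^ 7) ((-2) * X ^ 3 + (-3) * X ^ 7) ((-3) * X ^ 2 + (-3) * X ^ 6) (X ^ 2 + (-3) * X ^ 6) (2 * X ^ 6 + 3 * X ^ 10) (7 : ℤ[X]) 343 343 686 hp0_7 dw343 dw343 (by simp only [c3A]; ring) (by norm_num)
  have dw1372 : M 7 c3A ∣ (X : (ZMod 7)[X]) ^ 1372 - M 7 ((3 : ℤ[X]) + (-1) * X ^ 4) :=
    mul_step 7 c3A ((-3) * X ^ 2 + (-3) * X ^ 6) ((-3) * X ^ 2 + (-3) * X ^ 6) ((3 : ℤ[X]) + (-1) * X ^ 4) (((-1) : ℤ[X]) + (-3) * X ^ 4) (3 * X ^ 4 + 3 * X ^ 8) (7 : ℤ[X]) 686 686 1372 hp0_7 dw686 dw686 (by simp only [c3A]; ring) (by norm_num)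
  have dw2058 : M 7 c3A ∣ (X : (ZMod 7)[X]) ^ 2058 - M 7 (X ^ 2 + 3 * X ^ 6) :=
    mul_step 7 c3A ((3 : ℤ[X]) + (-1) * X ^ 4) ((-3) * X ^ 2 + (-3) * X ^ 6) (X ^ 2 + 3 * X ^ 6) ((-1) * X ^ 2) ((-1) * X ^ 2 + (-1) * X ^ 6) (7 : ℤ[X]) 1372 686 2058 hp0_7 dw1372 dw686 (by simp only [c3A]; ring) (by norm_num)
  have dw2401 : M 7 c3A ∣ (X : (ZMod 7)[X]) ^ 2401 - M 7 ((-1) * X) :=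
    mul_step 7 c3A (X ^ 2 + 3 * X ^ 6) ((-2) * X ^ 3 + (-3) * X ^ 7) ((-1) * X) ((-2) * X + 3 * X ^ 5) (X + (-1) * X ^ 5 + (-3) * X ^ 9) (7 : ℤ[X]) 2058 343 2401 hp0_7 dw2058 dw343 (by simp only [c3A]; ring) (by norm_num)
  intro e h1 h2
  have h3 : e ≤ 4 := by omega
  interval_cases e
  · exact coprime_cert 7 c3A (X ^ 7) (((-2) : ℤ[X]) + X ^ 2 + (-3) * X ^ 4 + X ^ 6) (3 * X + X ^ 3 + (-2) * X ^ 5 + 3 * X ^ 7) (((-1) : ℤ[X]) + (-2) * X ^ 4 + X ^ 6 + X ^ 12) (7 : ℤ[X]) (7 ^ 1) hp0_7 dw7 (by simp only [c3A]; ring)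
  · exact coprime_cert 7 c3A ((-3) * X + 2 * X ^ 5) (((-2) : ℤ[X]) + 3 * X ^ 4) (3 * X ^ 3 + X ^ 7) (((-1) : ℤ[X]) + (-1) * X ^ 4 + 2 * X ^ 8 + (-1) * X ^ 12) (7 : ℤ[X]) (7 ^ 2) hp0_7 (by rw [show (7:ℕ) ^ 2 = 49 by norm_num]; exact dw49) (by simp only [c3A]; ring)
  · exact coprime_cert 7 c3A ((-2) * X ^ 3 + (-3) * X ^ 7) (((-2) : ℤ[X]) + X ^ 2 + X ^ 4 + (-1) * X ^ 6) (3 * X + (-1) * X ^ 5 + X ^ 7) (((-1) : ℤ[X]) + (-1) * X ^ 4 + (-1) * X ^ 10) (7 : ℤ[X]) (7 ^ 3) hp0_7 (by rw [show (7:ℕ) ^ 3 = 343 by norm_num]; exact dw343) (by simp only [c3A]; ring)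
  · exact coprime_cert 7 c3A ((-1) * X) (((-2) : ℤ[X])) ((-2) * X ^ 3 + 3 * X ^ 7) (((-1) : ℤ[X])) (7 : ℤ[X]) (7 ^ 4) hp0_7 (by rw [show (7:ℕ) ^ 4 = 2401 by norm_num]; exact dw2401) (by simp only [c3A]; ring)

lemma c3A_ndeg : c3A.natDegree = 8 := by simp only [c3A]; compute_degree! <;> norm_num
lemma c3A_lead : c3A.leadingCoeff = -3 := by
  rw [Polynomial.leadingCoeff, c3A_ndeg]; simp only [c3A]; compute_degree! <;> norm_num
lemma c3A_deg : (M 7 c3A).natDegree = 8 := by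
  simp only [M]
  rw [natDegree_map_of_leadingCoeff_ne_zero _ (by
    rw [c3A_lead]; exact (by decide : ((-3 : ℤ) : ZMod 7) ≠ 0)), c3A_ndeg]
lemma c3A_irr : Irreducible (M 7 c3A) :=
  irreducible_of_coprime_certs 7 _ 8 c3A_deg (by norm_num) c3A_cop

noncomputable def c3B : ℤ[X] := ((-2) : ℤ[X]) + (-3) * X ^ 4 + X ^ 8

lemma c3B_cop : ∀ e, 1 ≤ e → 2 * e ≤ 8 → IsCoprime (M 7 c3B) ((X : (ZMod 7)[X]) ^ (7 ^ e) - X) := by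
  have dw1 : M 7 c3B ∣ (X : (ZMod 7)[X]) ^ 1 - M 7 X := by rw [M_X, pow_one, sub_self]; exact dvd_zero _
  have dw2 : M 7 c3B ∣ (X : (ZMod 7)[X]) ^ 2 - M 7 (X ^ 2) :=
    mul_step 7 c3B (X) (X) (X ^ 2) ((0 : ℤ[X])) ((0 : ℤ[X])) (7 : ℤ[X]) 1 1 2 hp0_7 dw1 dw1 (by simp only [c3B]; ring) (by norm_num)
  have dw4 : M 7 c3B ∣ (X : (ZMod 7)[X]) ^ 4 - M 7 (X ^ 4) :=
    mul_step 7 c3B (X ^ 2) (X ^ 2) (X ^ 4) ((0 : ℤ[X])) ((0 : ℤ[X])) (7 : ℤ[X]) 2 2 4 hp0_7 dw2 dw2 (by simp only [c3B]; ring) (by norm_num)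
  have dw6 : M 7 c3B ∣ (X : (ZMod 7)[X]) ^ 6 - M 7 (X ^ 6) :=
    mul_step 7 c3B (X ^ 4) (X ^ 2) (X ^ 6) ((0 : ℤ[X])) ((0 : ℤ[X])) (7 : ℤ[X]) 4 2 6 hp0_7 dw4 dw2 (by simp only [c3B]; ring) (by norm_num)
  have dw7 : M 7 c3B ∣ (X : (ZMod 7)[X]) ^ 7 - M 7 (X ^ 7) :=
    mul_step 7 c3B (X ^ 6) (X) (X ^ 7) ((0 : ℤ[X])) ((0 : ℤ[X])) (7 : ℤ[X]) 6 1 7 hp0_7 dw6 dw1 (by simp only [c3B]; ring) (by norm_num)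
  have dw14 : M 7 c3B ∣ (X : (ZMod 7)[X]) ^ 14 - M 7 ((-1) * X ^ 2 + (-3) * X ^ 6) :=
    mul_step 7 c3B (X ^ 7) (X ^ 7) ((-1) * X ^ 2 + (-3) * X ^ 6) (3 * X ^ 2 + X ^ 6) (X ^ 2 + 2 * X ^ 6) (7 : ℤ[X]) 7 7 14 hp0_7 dw7 dw7 (by simp only [c3B]; ring) (by norm_num)
  have dw28 : M 7 c3B ∣ (X : (ZMod 7)[X]) ^ 28 - M 7 ((3 : ℤ[X]) + (-1) * X ^ 4) :=
    mul_step 7 c3B ((-1) * X ^ 2 + (-3) * X ^ 6) ((-1) * X ^ 2 + (-3) * X ^ 6) ((3 : ℤ[X]) + (-1) * X ^ 4) (((-2) : ℤ[X]) + 2 * X ^ 4) (((-1) : ℤ[X]) + 2 * X ^ 8 + X ^ 12) (7 : ℤ[X]) 14 14 28 hp0_7 dw14 dw14 (by simp only [c3B]; ring) (by norm_num)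
  have dw42 : M 7 c3B ∣ (X : (ZMod 7)[X]) ^ 42 - M 7 (3 * X ^ 2 + X ^ 6) :=
    mul_step 7 c3B ((3 : ℤ[X]) + (-1) * X ^ 4) ((-1) * X ^ 2 + (-3) * X ^ 6) (3 * X ^ 2 + X ^ 6) (3 * X ^ 2) ((0 : ℤ[X])) (7 : ℤ[X]) 28 14 42 hp0_7 dw28 dw14 (by simp only [c3B]; ring) (by norm_num)
  have dw49 : M 7 c3B ∣ (X : (ZMod 7)[X]) ^ 49 - M 7 ((-2) * X + (-1) * X ^ 5) :=
    mul_step 7 c3B (3 * X ^ 2 + X ^ 6) (X ^ 7) ((-2) * X + (-1) * X ^ 5) ((-1) * X + X ^ 5) (X ^ 9) (7 : ℤ[X]) 42 7 49 hp0_7 dw42 dw7 (by simp only [c3B]; ring) (by norm_num)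
  have dw98 : M 7 c3B ∣ (X : (ZMod 7)[X]) ^ 98 - M 7 ((-1) * X ^ 2) :=
    mul_step 7 c3B ((-2) * X + (-1) * X ^ 5) ((-2) * X + (-1) * X ^ 5) ((-1) * X ^ 2) (X ^ 2) (X ^ 2 + X ^ 6) (7 : ℤ[X]) 49 49 98 hp0_7 dw49 dw49 (by simp only [c3B]; ring) (by norm_num)
  have dw196 : M 7 c3B ∣ (X : (ZMod 7)[X]) ^ 196 - M 7 (X ^ 4) :=
    mul_step 7 c3B ((-1) * X ^ 2) ((-1) * X ^ 2) (X ^ 4) ((0 : ℤ[X])) ((0 : ℤ[X])) (7 : ℤ[X]) 98 98 196 hp0_7 dw98 dw98 (by simp only [c3B]; ring) (by norm_num)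
  have dw294 : M 7 c3B ∣ (X : (ZMod 7)[X]) ^ 294 - M 7 ((-1) * X ^ 6) :=
    mul_step 7 c3B (X ^ 4) ((-1) * X ^ 2) ((-1) * X ^ 6) ((0 : ℤ[X])) ((0 : ℤ[X])) (7 : ℤ[X]) 196 98 294 hp0_7 dw196 dw98 (by simp only [c3B]; ring) (by norm_num)
  have dw343 : M 7 c3B ∣ (X : (ZMod 7)[X]) ^ 343 - M 7 (2 * X ^ 3 + (-2) * X ^ 7) :=
    mul_step 7 c3B ((-1) * X ^ 6) ((-2) * X + (-1) * X ^ 5) (2 * X ^ 3 + (-2) * X ^ 7) (X ^ 3) (X ^ 7) (7 : ℤ[X]) 294 49 343 hp0_7 dw294 dw49 (by simp only [c3B]; ring) (by norm_num)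
  have dw686 : M 7 c3B ∣ (X : (ZMod 7)[X]) ^ 686 - M 7 (X ^ 2 + 3 * X ^ 6) :=
    mul_step 7 c3B (2 * X ^ 3 + (-2) * X ^ 7) (2 * X ^ 3 + (-2) * X ^ 7) (X ^ 2 + 3 * X ^ 6) ((-3) * X ^ 2 + (-3) * X ^ 6) ((-1) * X ^ 2 + (-2) * X ^ 6 + (-2) * X ^ 10 + X ^ 14) (7 : ℤ[X]) 343 343 686 hp0_7 dw343 dw343 (by simp only [c3B]; ring) (by norm_num)
  have dw1372 : M 7 c3B ∣ (X : (ZMod 7)[X]) ^ 1372 - M 7 ((3 : ℤ[X]) + (-1) * X ^ 4) :=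
    mul_step 7 c3B (X ^ 2 + 3 * X ^ 6) (X ^ 2 + 3 * X ^ 6) ((3 : ℤ[X]) + (-1) * X ^ 4) (((-2) : ℤ[X]) + 2 * X ^ 4) (((-1) : ℤ[X]) + 2 * X ^ 8 + X ^ 12) (7 : ℤ[X]) 686 686 1372 hp0_7 dw686 dw686 (by simp only [c3B]; ring) (by norm_num)
  have dw2058 : M 7 c3B ∣ (X : (ZMod 7)[X]) ^ 2058 - M 7 ((-3) * X ^ 2 + (-1) * X ^ 6) :=
    mul_step 7 c3B ((3 : ℤ[X]) + (-1) * X ^ 4) (X ^ 2 + 3 * X ^ 6) ((-3) * X ^ 2 + (-1) * X ^ 6) ((-3) * X ^ 2) ((0 : ℤ[X])) (7 : ℤ[X]) 1372 686 2058 hp0_7 dw1372 dw686 (by simp only [c3B]; ring) (by norm_num)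
  have dw2401 : M 7 c3B ∣ (X : (ZMod 7)[X]) ^ 2401 - M 7 ((-1) * X) :=
    mul_step 7 c3B ((-3) * X ^ 2 + (-1) * X ^ 6) (2 * X ^ 3 + (-2) * X ^ 7) ((-1) * X) (3 * X + 2 * X ^ 5) (X + X ^ 5 + X ^ 9) (7 : ℤ[X]) 2058 343 2401 hp0_7 dw2058 dw343 (by simp only [c3B]; ring) (by norm_num)
  intro e h1 h2
  have h3 : e ≤ 4 := by omega
  interval_cases e
  · exact coprime_cert 7 c3B (X ^ 7) ((3 : ℤ[X]) + X ^ 2 + (-3) * X ^ 4 + (-3) * X ^ 6) ((-2) * X + (-3) * X ^ 3 + 3 * X ^ 5 + 3 * X ^ 7) (((-1) : ℤ[X]) + X ^ 8 + X ^ 10) (7 : ℤ[X]) (7 ^ 1) hp0_7 dw7 (by simp only [c3B]; ring)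
  · exact coprime_cert 7 c3B ((-2) * X + (-1) * X ^ 5) ((3 : ℤ[X]) + 2 * X ^ 4) ((-2) * X ^ 3 + 2 * X ^ 7) (((-1) : ℤ[X]) + (-1) * X ^ 4 + (-1) * X ^ 8) (7 : ℤ[X]) (7 ^ 2) hp0_7 (by rw [show (7:ℕ) ^ 2 = 49 by norm_num]; exact dw49) (by simp only [c3B]; ring)
  · exact coprime_cert 7 c3B (2 * X ^ 3 + (-2) * X ^ 7) ((3 : ℤ[X]) + 2 * X ^ 2 + 3 * X ^ 4 + 3 * X ^ 6) (3 * X + (-2) * X ^ 3 + (-2) * X ^ 5 + (-2) * X ^ 7) (((-1) : ℤ[X]) + (-1) * X ^ 2 + (-1) * X ^ 4 + (-2) * X ^ 6 + (-2) * X ^ 8 + (-1) * X ^ 10 + X ^ 12 + X ^ 14) (7 : ℤ[X]) (7 ^ 3) hp0_7 (by rw [show (7:ℕ) ^ 3 = 343 by norm_num]; exact dw343) (by simp only [c3B]; ring)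
  · exact coprime_cert 7 c3B ((-1) * X) ((3 : ℤ[X])) ((-1) * X ^ 3 + (-2) * X ^ 7) (((-1) : ℤ[X]) + (-1) * X ^ 4 + X ^ 8) (7 : ℤ[X]) (7 ^ 4) hp0_7 (by rw [show (7:ℕ) ^ 4 = 2401 by norm_num]; exact dw2401) (by simp only [c3B]; ring)

lemma c3B_ndeg : c3B.natDegree = 8 := by simp only [c3B]; compute_degree! <;> norm_num
lemma c3B_lead : c3B.leadingCoeff = 1 := by
  rw [Polynomial.leadingCoeff, c3B_ndeg]; simp only [c3B]; compute_degree! <;> norm_num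
lemma c3B_deg : (M 7 c3B).natDegree = 8 := by
  simp only [M]
  rw [natDegree_map_of_leadingCoeff_ne_zero _ (by
    rw [c3B_lead]; exact (by decide : ((1 : ℤ) : ZMod 7) ≠ 0)), c3B_ndeg]
lemma c3B_irr : Irreducible (M 7 c3B) :=
  irreducible_of_coprime_certs 7 _ 8 c3B_deg (by norm_num) c3B_cop

lemma c3_fact : M 7 f16 = M 7 c3A * M 7 c3B := by
  have h : f16 = c3A * c3B + (7 : ℤ[X]) * ((1 : ℤ[X]) + (-1) * X ^ 4 + (-5) * X ^ 8 + (-13) * X ^ 12 + 37 * X ^ 16) := by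
    simp only [f16, c3A, c3B]; ring
  rw [h, M_add, M_mul, M_mul, hp0_7, zero_mul, add_zero]

noncomputable def c4A : ℤ[X] := ((-6) : ℤ[X]) + X ^ 4

lemma c4A_cop : ∀ e, 1 ≤ e → 2 * e ≤ 4 → IsCoprime (M 17 c4A) ((X : (ZMod 17)[X]) ^ (17 ^ e) - X) := by
  have dw1 : M 17 c4A ∣ (X : (ZMod 17)[X]) ^ 1 - M 17 X := by rw [M_X, pow_one, sub_self]; exact dvd_zero _
  have dw2 : M 17 c4A ∣ (X : (ZMod 17)[X]) ^ 2 - M 17 (X ^ 2) :=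
    mul_step 17 c4A (X) (X) (X ^ 2) ((0 : ℤ[X])) ((0 : ℤ[X])) (17 : ℤ[X]) 1 1 2 hp0_17 dw1 dw1 (by simp only [c4A]; ring) (by norm_num)
  have dw4 : M 17 c4A ∣ (X : (ZMod 17)[X]) ^ 4 - M 17 ((6 : ℤ[X])) :=
    mul_step 17 c4A (X ^ 2) (X ^ 2) ((6 : ℤ[X])) ((1 : ℤ[X])) ((0 : ℤ[X])) (17 : ℤ[X]) 2 2 4 hp0_17 dw2 dw2 (by simp only [c4A]; ring) (by norm_num)
  have dw8 : M 17 c4A ∣ (X : (ZMod 17)[X]) ^ 8 - M 17 ((2 : ℤ[X])) :=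
    mul_step 17 c4A ((6 : ℤ[X])) ((6 : ℤ[X])) ((2 : ℤ[X])) ((0 : ℤ[X])) ((2 : ℤ[X])) (17 : ℤ[X]) 4 4 8 hp0_17 dw4 dw4 (by simp only [c4A]; ring) (by norm_num)
  have dw16 : M 17 c4A ∣ (X : (ZMod 17)[X]) ^ 16 - M 17 ((4 : ℤ[X])) :=
    mul_step 17 c4A ((2 : ℤ[X])) ((2 : ℤ[X])) ((4 : ℤ[X])) ((0 : ℤ[X])) ((0 : ℤ[X])) (17 : ℤ[X]) 8 8 16 hp0_17 dw8 dw8 (by simp only [c4A]; ring) (by norm_num)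
  have dw17 : M 17 c4A ∣ (X : (ZMod 17)[X]) ^ 17 - M 17 (4 * X) :=
    mul_step 17 c4A ((4 : ℤ[X])) (X) (4 * X) ((0 : ℤ[X])) ((0 : ℤ[X])) (17 : ℤ[X]) 16 1 17 hp0_17 dw16 dw1 (by simp only [c4A]; ring) (by norm_num)
  have dw34 : M 17 c4A ∣ (X : (ZMod 17)[X]) ^ 34 - M 17 ((-1) * X ^ 2) :=
    mul_step 17 c4A (4 * X) (4 * X) ((-1) * X ^ 2) ((0 : ℤ[X])) (X ^ 2) (17 : ℤ[X]) 17 17 34 hp0_17 dw17 dw17 (by simp only [c4A]; ring) (by norm_num)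
  have dw68 : M 17 c4A ∣ (X : (ZMod 17)[X]) ^ 68 - M 17 ((6 : ℤ[X])) :=
    mul_step 17 c4A ((-1) * X ^ 2) ((-1) * X ^ 2) ((6 : ℤ[X])) ((1 : ℤ[X])) ((0 : ℤ[X])) (17 : ℤ[X]) 34 34 68 hp0_17 dw34 dw34 (by simp only [c4A]; ring) (by norm_num)
  have dw136 : M 17 c4A ∣ (X : (ZMod 17)[X]) ^ 136 - M 17 ((2 : ℤ[X])) :=
    mul_step 17 c4A ((6 : ℤ[X])) ((6 : ℤ[X])) ((2 : ℤ[X])) ((0 : ℤ[X])) ((2 : ℤ[X])) (17 : ℤ[X]) 68 68 136 hp0_17 dw68 dw68 (by simp only [c4A]; ring) (by norm_num)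
  have dw272 : M 17 c4A ∣ (X : (ZMod 17)[X]) ^ 272 - M 17 ((4 : ℤ[X])) :=
    mul_step 17 c4A ((2 : ℤ[X])) ((2 : ℤ[X])) ((4 : ℤ[X])) ((0 : ℤ[X])) ((0 : ℤ[X])) (17 : ℤ[X]) 136 136 272 hp0_17 dw136 dw136 (by simp only [c4A]; ring) (by norm_num)
  have dw289 : M 17 c4A ∣ (X : (ZMod 17)[X]) ^ 289 - M 17 ((-1) * X) :=
    mul_step 17 c4A ((4 : ℤ[X])) (4 * X) ((-1) * X) ((0 : ℤ[X])) (X) (17 : ℤ[X]) 272 17 289 hp0_17 dw272 dw17 (by simp only [c4A]; ring) (by norm_num)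
  intro e h1 h2
  have h3 : e ≤ 2 := by omega
  interval_cases e
  · exact coprime_cert 17 c4A (4 * X) (((-3) : ℤ[X])) (X ^ 3) ((1 : ℤ[X])) (17 : ℤ[X]) (17 ^ 1) hp0_17 dw17 (by simp only [c4A]; ring)
  · exact coprime_cert 17 c4A ((-1) * X) (((-3) : ℤ[X])) (7 * X ^ 3) ((1 : ℤ[X]) + (-1) * X ^ 4) (17 : ℤ[X]) (17 ^ 2) hp0_17 (by rw [show (17:ℕ) ^ 2 = 289 by norm_num]; exact dw289) (by simp only [c4A]; ring)

lemma c4A_ndeg : c4A.natDegree = 4 := by simp only [c4A]; compute_degree! <;> norm_num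
lemma c4A_lead : c4A.leadingCoeff = 1 := by
  rw [Polynomial.leadingCoeff, c4A_ndeg]; simp only [c4A]; compute_degree! <;> norm_num
lemma c4A_deg : (M 17 c4A).natDegree = 4 := by
  simp only [M]
  rw [natDegree_map_of_leadingCoeff_ne_zero _ (by
    rw [c4A_lead]; exact (by decide : ((1 : ℤ) : ZMod 17) ≠ 0)), c4A_ndeg]
lemma c4A_irr : Irreducible (M 17 c4A) :=
  irreducible_of_coprime_certs 17 _ 4 c4A_deg (by norm_num) c4A_cop

noncomputable def c4B : ℤ[X] := ((-3) : ℤ[X]) + (-6) * X ^ 8 + X ^ 12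

lemma c4B_cop : ∀ e, 1 ≤ e → 2 * e ≤ 12 → IsCoprime (M 17 c4B) ((X : (ZMod 17)[X]) ^ (17 ^ e) - X) := by
  have dw1 : M 17 c4B ∣ (X : (ZMod 17)[X]) ^ 1 - M 17 X := by rw [M_X, pow_one, sub_self]; exact dvd_zero _
  have dw2 : M 17 c4B ∣ (X : (ZMod 17)[X]) ^ 2 - M 17 (X ^ 2) :=
    mul_step 17 c4B (X) (X) (X ^ 2) ((0 : ℤ[X])) ((0 : ℤ[X])) (17 : ℤ[X]) 1 1 2 hp0_17 dw1 dw1 (by simp only [c4B]; ring) (by norm_num)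
  have dw4 : M 17 c4B ∣ (X : (ZMod 17)[X]) ^ 4 - M 17 (X ^ 4) :=
    mul_step 17 c4B (X ^ 2) (X ^ 2) (X ^ 4) ((0 : ℤ[X])) ((0 : ℤ[X])) (17 : ℤ[X]) 2 2 4 hp0_17 dw2 dw2 (by simp only [c4B]; ring) (by norm_num)
  have dw8 : M 17 c4B ∣ (X : (ZMod 17)[X]) ^ 8 - M 17 (X ^ 8) :=
    mul_step 17 c4B (X ^ 4) (X ^ 4) (X ^ 8) ((0 : ℤ[X])) ((0 : ℤ[X])) (17 : ℤ[X]) 4 4 8 hp0_17 dw4 dw4 (by simp only [c4B]; ring) (by norm_num)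
  have dw16 : M 17 c4B ∣ (X : (ZMod 17)[X]) ^ 16 - M 17 ((1 : ℤ[X]) + 3 * X ^ 4 + 2 * X ^ 8) :=
    mul_step 17 c4B (X ^ 8) (X ^ 8) ((1 : ℤ[X]) + 3 * X ^ 4 + 2 * X ^ 8) ((6 : ℤ[X]) + X ^ 4) ((1 : ℤ[X]) + 2 * X ^ 8) (17 : ℤ[X]) 8 8 16 hp0_17 dw8 dw8 (by simp only [c4B]; ring) (by norm_num)
  have dw17 : M 17 c4B ∣ (X : (ZMod 17)[X]) ^ 17 - M 17 (X + 3 * X ^ 5 + 2 * X ^ 9) :=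
    mul_step 17 c4B ((1 : ℤ[X]) + 3 * X ^ 4 + 2 * X ^ 8) (X) (X + 3 * X ^ 5 + 2 * X ^ 9) ((0 : ℤ[X])) ((0 : ℤ[X])) (17 : ℤ[X]) 16 1 17 hp0_17 dw16 dw1 (by simp only [c4B]; ring) (by norm_num)
  have dw34 : M 17 c4B ∣ (X : (ZMod 17)[X]) ^ 34 - M 17 (7 * X ^ 2 + X ^ 6 + 8 * X ^ 10) :=
    mul_step 17 c4B (X + 3 * X ^ 5 + 2 * X ^ 9) (X + 3 * X ^ 5 + 2 * X ^ 9) (7 * X ^ 2 + X ^ 6 + 8 * X ^ 10) (2 * X ^ 2 + 4 * X ^ 6) (X ^ 6 + X ^ 10 + 2 * X ^ 14) (17 : ℤ[X]) 17 17 34 hp0_17 dw17 dw17 (by simp only [c4B]; ring) (by norm_num)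
  have dw68 : M 17 c4B ∣ (X : (ZMod 17)[X]) ^ 68 - M 17 ((8 : ℤ[X]) + 8 * X ^ 4 + X ^ 8) :=
    mul_step 17 c4B (7 * X ^ 2 + X ^ 6 + 8 * X ^ 10) (7 * X ^ 2 + X ^ 6 + 8 * X ^ 10) ((8 : ℤ[X]) + 8 * X ^ 4 + X ^ 8) (((-3) : ℤ[X]) + (-8) * X ^ 4 + (-4) * X ^ 8) (((-1) : ℤ[X]) + X ^ 4 + (-1) * X ^ 8 + 4 * X ^ 12 + 4 * X ^ 20) (17 : ℤ[X]) 34 34 68 hp0_17 dw34 dw34 (by simp only [c4B]; ring) (by norm_num)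
  have dw136 : M 17 c4B ∣ (X : (ZMod 17)[X]) ^ 136 - M 17 (((-6) : ℤ[X]) + (-5) * X ^ 4 + 8 * X ^ 8) :=
    mul_step 17 c4B ((8 : ℤ[X]) + 8 * X ^ 4 + X ^ 8) ((8 : ℤ[X]) + 8 * X ^ 4 + X ^ 8) (((-6) : ℤ[X]) + (-5) * X ^ 4 + 8 * X ^ 8) ((5 : ℤ[X]) + X ^ 4) ((5 : ℤ[X]) + 8 * X ^ 4 + 6 * X ^ 8 + X ^ 12) (17 : ℤ[X]) 68 68 136 hp0_17 dw68 dw68 (by simp only [c4B]; ring) (by norm_num)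
  have dw272 : M 17 c4B ∣ (X : (ZMod 17)[X]) ^ 272 - M 17 (((-4) : ℤ[X]) + (-3) * X ^ 4 + 2 * X ^ 8) :=
    mul_step 17 c4B (((-6) : ℤ[X]) + (-5) * X ^ 4 + 8 * X ^ 8) (((-6) : ℤ[X]) + (-5) * X ^ 4 + 8 * X ^ 8) (((-4) : ℤ[X]) + (-3) * X ^ 4 + 2 * X ^ 8) (((-2) : ℤ[X]) + (-4) * X ^ 4) ((2 : ℤ[X]) + 3 * X ^ 4 + (-5) * X ^ 8 + (-6) * X ^ 12 + 4 * X ^ 16) (17 : ℤ[X]) 136 136 272 hp0_17 dw136 dw136 (by simp only [c4B]; ring) (by norm_num)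
  have dw289 : M 17 c4B ∣ (X : (ZMod 17)[X]) ^ 289 - M 17 ((-3) * X ^ 5 + (-7) * X ^ 9) :=
    mul_step 17 c4B (((-4) : ℤ[X]) + (-3) * X ^ 4 + 2 * X ^ 8) (X + 3 * X ^ 5 + 2 * X ^ 9) ((-3) * X ^ 5 + (-7) * X ^ 9) (7 * X + 4 * X ^ 5) (X + 2 * X ^ 9 + X ^ 13) (17 : ℤ[X]) 272 17 289 hp0_17 dw272 dw17 (by simp only [c4B]; ring) (by norm_num)
  have dw578 : M 17 c4B ∣ (X : (ZMod 17)[X]) ^ 578 - M 17 (5 * X ^ 2 + (-6) * X ^ 6 + 2 * X ^ 10) :=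
    mul_step 17 c4B ((-3) * X ^ 5 + (-7) * X ^ 9) ((-3) * X ^ 5 + (-7) * X ^ 9) (5 * X ^ 2 + (-6) * X ^ 6 + 2 * X ^ 10) ((-4) * X ^ 2 + (-2) * X ^ 6) ((-1) * X ^ 2 + (-1) * X ^ 10 + 2 * X ^ 14 + 3 * X ^ 18) (17 : ℤ[X]) 289 289 578 hp0_17 dw289 dw289 (by simp only [c4B]; ring) (by norm_num)
  have dw1156 : M 17 c4B ∣ (X : (ZMod 17)[X]) ^ 1156 - M 17 (((-2) : ℤ[X]) + 8 * X ^ 4 + (-1) * X ^ 8) :=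
    mul_step 17 c4B (5 * X ^ 2 + (-6) * X ^ 6 + 2 * X ^ 10) (5 * X ^ 2 + (-6) * X ^ 6 + 2 * X ^ 10) (((-2) : ℤ[X]) + 8 * X ^ 4 + (-1) * X ^ 8) ((5 : ℤ[X]) + 4 * X ^ 8) ((1 : ℤ[X]) + X ^ 4 + (-1) * X ^ 8 + 3 * X ^ 12) (17 : ℤ[X]) 578 578 1156 hp0_17 dw578 dw578 (by simp only [c4B]; ring) (by norm_num)
  have dw2312 : M 17 c4B ∣ (X : (ZMod 17)[X]) ^ 2312 - M 17 ((8 : ℤ[X]) + 5 * X ^ 4 + 8 * X ^ 8) :=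
    mul_step 17 c4B (((-2) : ℤ[X]) + 8 * X ^ 4 + (-1) * X ^ 8) (((-2) : ℤ[X]) + 8 * X ^ 4 + (-1) * X ^ 8) ((8 : ℤ[X]) + 5 * X ^ 4 + 8 * X ^ 8) ((7 : ℤ[X]) + X ^ 4) ((1 : ℤ[X]) + (-2) * X ^ 4 + 6 * X ^ 8 + (-1) * X ^ 12) (17 : ℤ[X]) 1156 1156 2312 hp0_17 dw1156 dw1156 (by simp only [c4B]; ring) (by norm_num)
  have dw4624 : M 17 c4B ∣ (X : (ZMod 17)[X]) ^ 4624 - M 17 (((-6) : ℤ[X]) + (-4) * X ^ 8) :=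
    mul_step 17 c4B ((8 : ℤ[X]) + 5 * X ^ 4 + 8 * X ^ 8) ((8 : ℤ[X]) + 5 * X ^ 4 + 8 * X ^ 8) (((-6) : ℤ[X]) + (-4) * X ^ 8) ((5 : ℤ[X]) + (-4) * X ^ 4) ((5 : ℤ[X]) + 4 * X ^ 4 + 11 * X ^ 8 + 3 * X ^ 12 + 4 * X ^ 16) (17 : ℤ[X]) 2312 2312 4624 hp0_17 dw2312 dw2312 (by simp only [c4B]; ring) (by norm_num)
  have dw4913 : M 17 c4B ∣ (X : (ZMod 17)[X]) ^ 4913 - M 17 ((-4) * X) :=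
    mul_step 17 c4B (((-6) : ℤ[X]) + (-4) * X ^ 8) ((-3) * X ^ 5 + (-7) * X ^ 9) ((-4) * X) ((-7) * X + (-6) * X ^ 5) ((-1) * X + (-1) * X ^ 13 + 2 * X ^ 17) (17 : ℤ[X]) 4624 289 4913 hp0_17 dw4624 dw289 (by simp only [c4B]; ring) (by norm_num)
  have dw9826 : M 17 c4B ∣ (X : (ZMod 17)[X]) ^ 9826 - M 17 ((-1) * X ^ 2) :=
    mul_step 17 c4B ((-4) * X) ((-4) * X) ((-1) * X ^ 2) ((0 : ℤ[X])) (X ^ 2) (17 : ℤ[X]) 4913 4913 9826 hp0_17 dw4913 dw4913 (by simp only [c4B]; ring) (by norm_num)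
  have dw19652 : M 17 c4B ∣ (X : (ZMod 17)[X]) ^ 19652 - M 17 (X ^ 4) :=
    mul_step 17 c4B ((-1) * X ^ 2) ((-1) * X ^ 2) (X ^ 4) ((0 : ℤ[X])) ((0 : ℤ[X])) (17 : ℤ[X]) 9826 9826 19652 hp0_17 dw9826 dw9826 (by simp only [c4B]; ring) (by norm_num)
  have dw39304 : M 17 c4B ∣ (X : (ZMod 17)[X]) ^ 39304 - M 17 (X ^ 8) :=
    mul_step 17 c4B (X ^ 4) (X ^ 4) (X ^ 8) ((0 : ℤ[X])) ((0 : ℤ[X])) (17 : ℤ[X]) 19652 19652 39304 hp0_17 dw19652 dw19652 (by simp only [c4B]; ring) (by norm_num)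
  have dw78608 : M 17 c4B ∣ (X : (ZMod 17)[X]) ^ 78608 - M 17 ((1 : ℤ[X]) + 3 * X ^ 4 + 2 * X ^ 8) :=
    mul_step 17 c4B (X ^ 8) (X ^ 8) ((1 : ℤ[X]) + 3 * X ^ 4 + 2 * X ^ 8) ((6 : ℤ[X]) + X ^ 4) ((1 : ℤ[X]) + 2 * X ^ 8) (17 : ℤ[X]) 39304 39304 78608 hp0_17 dw39304 dw39304 (by simp only [c4B]; ring) (by norm_num)
  have dw83521 : M 17 c4B ∣ (X : (ZMod 17)[X]) ^ 83521 - M 17 ((-4) * X + 5 * X ^ 5 + (-8) * X ^ 9) :=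
    mul_step 17 c4B ((1 : ℤ[X]) + 3 * X ^ 4 + 2 * X ^ 8) ((-4) * X) ((-4) * X + 5 * X ^ 5 + (-8) * X ^ 9) ((0 : ℤ[X])) ((-1) * X ^ 5) (17 : ℤ[X]) 78608 4913 83521 hp0_17 dw78608 dw4913 (by simp only [c4B]; ring) (by norm_num)
  have dw167042 : M 17 c4B ∣ (X : (ZMod 17)[X]) ^ 167042 - M 17 ((-7) * X ^ 2 + (-1) * X ^ 6 + (-8) * X ^ 10) :=
    mul_step 17 c4B ((-4) * X + 5 * X ^ 5 + (-8) * X ^ 9) ((-4) * X + 5 * X ^ 5 + (-8) * X ^ 9) ((-7) * X ^ 2 + (-1) * X ^ 6 + (-8) * X ^ 10) ((-2) * X ^ 2 + (-4) * X ^ 6) (X ^ 2 + (-3) * X ^ 6 + 5 * X ^ 10 + (-6) * X ^ 14 + 4 * X ^ 18) (17 : ℤ[X]) 83521 83521 167042 hp0_17 dw83521 dw83521 (by simp only [c4B]; ring) (by norm_num)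
  have dw334084 : M 17 c4B ∣ (X : (ZMod 17)[X]) ^ 334084 - M 17 ((8 : ℤ[X]) + 8 * X ^ 4 + X ^ 8) :=
    mul_step 17 c4B ((-7) * X ^ 2 + (-1) * X ^ 6 + (-8) * X ^ 10) ((-7) * X ^ 2 + (-1) * X ^ 6 + (-8) * X ^ 10) ((8 : ℤ[X]) + 8 * X ^ 4 + X ^ 8) (((-3) : ℤ[X]) + (-8) * X ^ 4 + (-4) * X ^ 8) (((-1) : ℤ[X]) + X ^ 4 + (-1) * X ^ 8 + 4 * X ^ 12 + 4 * X ^ 20) (17 : ℤ[X]) 167042 167042 334084 hp0_17 dw167042 dw167042 (by simp only [c4B]; ring) (by norm_num)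
  have dw668168 : M 17 c4B ∣ (X : (ZMod 17)[X]) ^ 668168 - M 17 (((-6) : ℤ[X]) + (-5) * X ^ 4 + 8 * X ^ 8) :=
    mul_step 17 c4B ((8 : ℤ[X]) + 8 * X ^ 4 + X ^ 8) ((8 : ℤ[X]) + 8 * X ^ 4 + X ^ 8) (((-6) : ℤ[X]) + (-5) * X ^ 4 + 8 * X ^ 8) ((5 : ℤ[X]) + X ^ 4) ((5 : ℤ[X]) + 8 * X ^ 4 + 6 * X ^ 8 + X ^ 12) (17 : ℤ[X]) 334084 334084 668168 hp0_17 dw334084 dw334084 (by simp only [c4B]; ring) (by norm_num)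
  have dw1336336 : M 17 c4B ∣ (X : (ZMod 17)[X]) ^ 1336336 - M 17 (((-4) : ℤ[X]) + (-3) * X ^ 4 + 2 * X ^ 8) :=
    mul_step 17 c4B (((-6) : ℤ[X]) + (-5) * X ^ 4 + 8 * X ^ 8) (((-6) : ℤ[X]) + (-5) * X ^ 4 + 8 * X ^ 8) (((-4) : ℤ[X]) + (-3) * X ^ 4 + 2 * X ^ 8) (((-2) : ℤ[X]) + (-4) * X ^ 4) ((2 : ℤ[X]) + 3 * X ^ 4 + (-5) * X ^ 8 + (-6) * X ^ 12 + 4 * X ^ 16) (17 : ℤ[X]) 668168 668168 1336336 hp0_17 dw668168 dw668168 (by simp only [c4B]; ring) (by norm_num)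
  have dw1419857 : M 17 c4B ∣ (X : (ZMod 17)[X]) ^ 1419857 - M 17 ((-5) * X ^ 5 + (-6) * X ^ 9) :=
    mul_step 17 c4B (((-4) : ℤ[X]) + (-3) * X ^ 4 + 2 * X ^ 8) ((-4) * X + 5 * X ^ 5 + (-8) * X ^ 9) ((-5) * X ^ 5 + (-6) * X ^ 9) (6 * X + X ^ 5) (2 * X + 3 * X ^ 9 + 2 * X ^ 13 + (-1) * X ^ 17) (17 : ℤ[X]) 1336336 83521 1419857 hp0_17 dw1336336 dw83521 (by simp only [c4B]; ring) (by norm_num)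
  have dw2839714 : M 17 c4B ∣ (X : (ZMod 17)[X]) ^ 2839714 - M 17 ((-5) * X ^ 2 + 6 * X ^ 6 + (-2) * X ^ 10) :=
    mul_step 17 c4B ((-5) * X ^ 5 + (-6) * X ^ 9) ((-5) * X ^ 5 + (-6) * X ^ 9) ((-5) * X ^ 2 + 6 * X ^ 6 + (-2) * X ^ 10) (4 * X ^ 2 + 2 * X ^ 6) (X ^ 2 + 3 * X ^ 10 + 4 * X ^ 14 + 2 * X ^ 18) (17 : ℤ[X]) 1419857 1419857 2839714 hp0_17 dw1419857 dw1419857 (by simp only [c4B]; ring) (by norm_num)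
  have dw5679428 : M 17 c4B ∣ (X : (ZMod 17)[X]) ^ 5679428 - M 17 (((-2) : ℤ[X]) + 8 * X ^ 4 + (-1) * X ^ 8) :=
    mul_step 17 c4B ((-5) * X ^ 2 + 6 * X ^ 6 + (-2) * X ^ 10) ((-5) * X ^ 2 + 6 * X ^ 6 + (-2) * X ^ 10) (((-2) : ℤ[X]) + 8 * X ^ 4 + (-1) * X ^ 8) ((5 : ℤ[X]) + 4 * X ^ 8) ((1 : ℤ[X]) + X ^ 4 + (-1) * X ^ 8 + 3 * X ^ 12) (17 : ℤ[X]) 2839714 2839714 5679428 hp0_17 dw2839714 dw2839714 (by simp only [c4B]; ring) (by norm_num)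
  have dw11358856 : M 17 c4B ∣ (X : (ZMod 17)[X]) ^ 11358856 - M 17 ((8 : ℤ[X]) + 5 * X ^ 4 + 8 * X ^ 8) :=
    mul_step 17 c4B (((-2) : ℤ[X]) + 8 * X ^ 4 + (-1) * X ^ 8) (((-2) : ℤ[X]) + 8 * X ^ 4 + (-1) * X ^ 8) ((8 : ℤ[X]) + 5 * X ^ 4 + 8 * X ^ 8) ((7 : ℤ[X]) + X ^ 4) ((1 : ℤ[X]) + (-2) * X ^ 4 + 6 * X ^ 8 + (-1) * X ^ 12) (17 : ℤ[X]) 5679428 5679428 11358856 hp0_17 dw5679428 dw5679428 (by simp only [c4B]; ring) (by norm_num)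
  have dw22717712 : M 17 c4B ∣ (X : (ZMod 17)[X]) ^ 22717712 - M 17 (((-6) : ℤ[X]) + (-4) * X ^ 8) :=
    mul_step 17 c4B ((8 : ℤ[X]) + 5 * X ^ 4 + 8 * X ^ 8) ((8 : ℤ[X]) + 5 * X ^ 4 + 8 * X ^ 8) (((-6) : ℤ[X]) + (-4) * X ^ 8) ((5 : ℤ[X]) + (-4) * X ^ 4) ((5 : ℤ[X]) + 4 * X ^ 4 + 11 * X ^ 8 + 3 * X ^ 12 + 4 * X ^ 16) (17 : ℤ[X]) 11358856 11358856 22717712 hp0_17 dw11358856 dw11358856 (by simp only [c4B]; ring) (by norm_num)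
  have dw24137569 : M 17 c4B ∣ (X : (ZMod 17)[X]) ^ 24137569 - M 17 ((-1) * X) :=
    mul_step 17 c4B (((-6) : ℤ[X]) + (-4) * X ^ 8) ((-5) * X ^ 5 + (-6) * X ^ 9) ((-1) * X) ((-6) * X + 7 * X ^ 5) ((-1) * X + 3 * X ^ 5 + 4 * X ^ 13 + X ^ 17) (17 : ℤ[X]) 22717712 1419857 24137569 hp0_17 dw22717712 dw1419857 (by simp only [c4B]; ring) (by norm_num)
  intro e h1 h2
  have h3 : e ≤ 6 := by omega
  interval_cases e
  · exact coprime_cert 17 c4B (X + 3 * X ^ 5 + 2 * X ^ 9) (((-6) : ℤ[X]) + (-8) * X ^ 8) ((-3) * X ^ 3 + 4 * X ^ 7 + 4 * X ^ 11) ((1 : ℤ[X]) + 3 * X ^ 8 + 4 * X ^ 16) (17 : ℤ[X]) (17 ^ 1) hp0_17 dw17 (by simp only [c4B]; ring)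
  · exact coprime_cert 17 c4B ((-3) * X ^ 5 + (-7) * X ^ 9) (((-6) : ℤ[X]) + 8 * X ^ 4 + (-7) * X ^ 8) ((-7) * X ^ 3 + (-7) * X ^ 7 + (-1) * X ^ 11) ((1 : ℤ[X]) + (-1) * X ^ 4 + 5 * X ^ 8 + X ^ 12 + 6 * X ^ 16) (17 : ℤ[X]) (17 ^ 2) hp0_17 (by rw [show (17:ℕ) ^ 2 = 289 by norm_num]; exact dw289) (by simp only [c4B]; ring)
  · exact coprime_cert 17 c4B ((-4) * X) (((-6) : ℤ[X])) ((-3) * X ^ 7 + (-8) * X ^ 11) ((1 : ℤ[X]) + 3 * X ^ 8 + 2 * X ^ 12) (17 : ℤ[X]) (17 ^ 3) hp0_17 (by rw [show (17:ℕ) ^ 3 = 4913 by norm_num]; exact dw4913) (by simp only [c4B]; ring)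
  · exact coprime_cert 17 c4B ((-4) * X + 5 * X ^ 5 + (-8) * X ^ 9) (((-6) : ℤ[X]) + (-6) * X ^ 4 + (-4) * X ^ 8) (7 * X ^ 3 + 3 * X ^ 7 + 8 * X ^ 11) ((1 : ℤ[X]) + (-1) * X ^ 4 + 4 * X ^ 8 + (-3) * X ^ 12 + 2 * X ^ 16 + (-4) * X ^ 20) (17 : ℤ[X]) (17 ^ 4) hp0_17 (by rw [show (17:ℕ) ^ 4 = 83521 by norm_num]; exact dw83521) (by simp only [c4B]; ring)
  · exact coprime_cert 17 c4B ((-5) * X ^ 5 + (-6) * X ^ 9) (((-6) : ℤ[X]) + 5 * X ^ 4 + (-5) * X ^ 8) (2 * X ^ 3 + 7 * X ^ 7 + 2 * X ^ 11) ((1 : ℤ[X]) + (-1) * X ^ 4 + 2 * X ^ 8 + (-5) * X ^ 12 + (-1) * X ^ 16 + (-1) * X ^ 20) (17 : ℤ[X]) (17 ^ 5) hp0_17 (by rw [show (17:ℕ) ^ 5 = 1419857 by norm_num]; exact dw1419857) (by simp only [c4B]; ring)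
  · exact coprime_cert 17 c4B ((-1) * X) (((-6) : ℤ[X])) (X ^ 7 + (-3) * X ^ 11) ((1 : ℤ[X]) + 2 * X ^ 8) (17 : ℤ[X]) (17 ^ 6) hp0_17 (by rw [show (17:ℕ) ^ 6 = 24137569 by norm_num]; exact dw24137569) (by simp only [c4B]; ring)

lemma c4B_ndeg : c4B.natDegree = 12 := by simp only [c4B]; compute_degree! <;> norm_num
lemma c4B_lead : c4B.leadingCoeff = 1 := by
  rw [Polynomial.leadingCoeff, c4B_ndeg]; simp only [c4B]; compute_degree! <;> norm_num
lemma c4B_deg : (M 17 c4B).natDegree = 12 := by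
  simp only [M]
  rw [natDegree_map_of_leadingCoeff_ne_zero _ (by
    rw [c4B_lead]; exact (by decide : ((1 : ℤ) : ZMod 17) ≠ 0)), c4B_ndeg]
lemma c4B_irr : Irreducible (M 17 c4B) :=
  irreducible_of_coprime_certs 17 _ 12 c4B_deg (by norm_num) c4B_cop

lemma c4_fact : M 17 f16 = M 17 c4A * M 17 c4B := by
  have h : f16 = c4A * c4B + (17 : ℤ[X]) * (((-1) : ℤ[X]) + (-1) * X ^ 4 + (-4) * X ^ 8 + (-4) * X ^ 12 + 15 * X ^ 16) := by
    simp only [f16, c4A, c4B]; ring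
  rw [h, M_add, M_mul, M_mul, hp0_17, zero_mul, add_zero]

lemma f8_prim : f8.IsPrimitive :=
  prim_of_c0 f8 (by rw [coeff_zero_eq_eval_zero]; simp [f8])

lemma f8_irr : Irreducible f8 := by
  have hf0 : f8 ≠ 0 := by
    intro h
    have h2 := f8_ndeg
    rw [h, natDegree_zero] at h2
    exact absurd h2 (by norm_num)
  constructor
  · intro h
    have h2 := natDegree_eq_zero_of_isUnit h
    rw [f8_ndeg] at h2
    exact absurd h2 (by norm_num)
  · intro a b hab
    by_contra hc
    push_neg at hc
    have ha0 : a ≠ 0 := by rintro rfl; rw [zero_mul] at hab; exact hf0 hab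
    have hb0 : b ≠ 0 := by rintro rfl; rw [mul_zero] at hab; exact hf0 hab
    have hsum : a.natDegree + b.natDegree = 8 := by
      rw [← f8_ndeg, hab, natDegree_mul ha0 hb0]
    have hmin : ∀ c d : ℤ[X], f8 = c * d → ¬IsUnit c → 1 ≤ c.natDegree := by
      intro c d hcd hcu
      by_contra h
      push_neg at h
      obtain ⟨r, rfl⟩ := Polynomial.natDegree_eq_zero.mp (show c.natDegree = 0 by omega)
      exact hcu (isUnit_C.mpr (f8_prim r ⟨d, hcd⟩))
    have ha1 := hmin a b hab hc.1
    have hb1 := hmin b a (show f8 = b * a by rw [hab, mul_comm]) hc.2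
    have hA := degree_constraint 17 f8 c1A c1B a b hab c1_fact c1A_irr c1B_irr
      (lead_ne 17 f8 a b hab f8_lead (by decide))
    rw [c1A_deg, c1B_deg] at hA
    have hB := degree_constraint 3 f8 c2A c2B a b hab c2_fact c2A_irr c2B_irr
      (lead_ne 3 f8 a b hab f8_lead (by decide))
    rw [c2A_deg, c2B_deg] at hB
    clear hmin
    omega

lemma f16_prim : f16.IsPrimitive :=
  prim_of_c0 f16 (by rw [coeff_zero_eq_eval_zero]; simp [f16])

lemma f16_irr : Irreducible f16 := by
  have hf0 : f16 ≠ 0 := by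
    intro h
    have h2 := f16_ndeg
    rw [h, natDegree_zero] at h2
    exact absurd h2 (by norm_num)
  constructor
  · intro h
    have h2 := natDegree_eq_zero_of_isUnit h
    rw [f16_ndeg] at h2
    exact absurd h2 (by norm_num)
  · intro a b hab
    by_contra hc
    push_neg at hc
    have ha0 : a ≠ 0 := by rintro rfl; rw [zero_mul] at hab; exact hf0 hab
    have hb0 : b ≠ 0 := by rintro rfl; rw [mul_zero] at hab; exact hf0 hab
    have hsum : a.natDegree + b.natDegree = 16 := by
      rw [← f16_ndeg, hab, natDegree_mul ha0 hb0]
    have hmin : ∀ c d : ℤ[X], f16 = c * d → ¬IsUnit c → 1 ≤ c.natDegree := by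
      intro c d hcd hcu
      by_contra h
      push_neg at h
      obtain ⟨r, rfl⟩ := Polynomial.natDegree_eq_zero.mp (show c.natDegree = 0 by omega)
      exact hcu (isUnit_C.mpr (f16_prim r ⟨d, hcd⟩))
    have ha1 := hmin a b hab hc.1
    have hb1 := hmin b a (show f16 = b * a by rw [hab, mul_comm]) hc.2
    have hA := degree_constraint 7 f16 c3A c3B a b hab c3_fact c3A_irr c3B_irr
      (lead_ne 7 f16 a b hab f16_lead (by decide))
    rw [c3A_deg, c3B_deg] at hA
    have hB := degree_constraint 17 f16 c4A c4B a b hab c4_fact c4A_irr c4B_irr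
      (lead_ne 17 f16 a b hab f16_lead (by decide))
    rw [c4A_deg, c4B_deg] at hB
    clear hmin
    omega

lemma comp8 : ((256 * X ^ 4 - 80 * X ^ 3 - 32 * X ^ 2 - 20 * X + 1 : ℚ[X]).comp (X ^ 2))
    = f8.map (Int.castRingHom ℚ) := by
  simp only [f8, Polynomial.map_add, Polynomial.map_sub, Polynomial.map_mul, Polynomial.map_pow,
    Polynomial.map_X, Polynomial.map_ofNat, Polynomial.map_one, Polynomial.map_neg,
    add_comp, sub_comp, mul_comp, pow_comp, X_comp, one_comp, ofNat_comp]
  ring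

lemma comp16 : ((256 * X ^ 4 - 80 * X ^ 3 - 32 * X ^ 2 - 20 * X + 1 : ℚ[X]).comp (X ^ 4))
    = f16.map (Int.castRingHom ℚ) := by
  simp only [f16, Polynomial.map_add, Polynomial.map_sub, Polynomial.map_mul, Polynomial.map_pow,
    Polynomial.map_X, Polynomial.map_ofNat, Polynomial.map_one, Polynomial.map_neg,
    add_comp, sub_comp, mul_comp, pow_comp, X_comp, one_comp, ofNat_comp]
  ring

end Stmt11Cert

theorem stmt_11 :
    Irreducible ((256 * X ^ 4 - 80 * X ^ 3 - 32 * X ^ 2 - 20 * X + 1 : ℚ[X]).comp (X ^ 2)) ∧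
    Irreducible ((256 * X ^ 4 - 80 * X ^ 3 - 32 * X ^ 2 - 20 * X + 1 : ℚ[X]).comp (X ^ 4)) := by
  constructor
  · rw [Stmt11Cert.comp8]
    exact (Polynomial.IsPrimitive.Int.irreducible_iff_irreducible_map_cast Stmt11Cert.f8_prim).mp Stmt11Cert.f8_irr
  · rw [Stmt11Cert.comp16]
    exact (Polynomial.IsPrimitive.Int.irreducible_iff_irreducible_map_cast Stmt11Cert.f16_prim).mp Stmt11Cert.f16_irr
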